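/- arXiv:1207.6104 — 6 statements merged into one kernel-verified Lean document; each statement's English description precedes it below -/
import Mathlib

section
/- ∏_{p prime} (p² + 1)/(p² - 1) = 5/2. -/
open scoped Real

noncomputable def zpow2hom : ℕ →*₀ ℝ where
  toFun n := ((n : ℝ) ^ 2)⁻¹
  map_zero' := by simp
  map_one' := by simp
  map_mul' m n := by push_cast; rw [mul_pow, mul_inv]

noncomputable def zpow4hom : ℕ →*₀ ℝ where
  toFun n := ((n : ℝ) ^ 4)⁻¹
  map_zero' := by simp
  map_one' := by simp
  map_mul' m n := by push_cast; rw [mul_pow, mul_inv]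

@[simp] lemma zpow2hom_apply (n : ℕ) : zpow2hom n = ((n : ℝ) ^ 2)⁻¹ := rfl
@[simp] lemma zpow4hom_apply (n : ℕ) : zpow4hom n = ((n : ℝ) ^ 4)⁻¹ := rfl

theorem prod_primes_sq_add_one_div_sq_sub_one :
    ∏' p : Nat.Primes, (((p : ℝ) ^ 2 + 1) / ((p : ℝ) ^ 2 - 1)) = 5 / 2 := by
  have hsum2 : Summable (fun n : ℕ ↦ ‖zpow2hom n‖) := by
    have := Real.summable_one_div_nat_pow.mpr (le_refl 2)
    simpa [one_div] using this.abs
  have hsum4 : Summable (fun n : ℕ ↦ ‖zpow4hom n‖) := by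
    have := Real.summable_one_div_nat_pow.mpr (show 2 ≤ 4 by norm_num)
    simpa [one_div] using this.abs
  have ht2 : ∑' n : ℕ, zpow2hom n = π ^ 2 / 6 := by
    have := hasSum_zeta_two.tsum_eq
    simpa [one_div] using this
  have ht4 : ∑' n : ℕ, zpow4hom n = π ^ 4 / 90 := by
    have := hasSum_zeta_four.tsum_eq
    simpa [one_div] using this
  have h2 : HasProd (fun p : Nat.Primes ↦ (1 - zpow2hom p)⁻¹) (π ^ 2 / 6) := by
    have := EulerProduct.eulerProduct_completely_multiplicative_hasProd hsum2
    rwa [ht2] at this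
  have h4 : HasProd (fun p : Nat.Primes ↦ (1 - zpow4hom p)⁻¹) (π ^ 4 / 90) := by
    have := EulerProduct.eulerProduct_completely_multiplicative_hasProd hsum4
    rwa [ht4] at this
  have hne : (π ^ 4 / 90 : ℝ) ≠ 0 := by positivity
  have hpoint : ∀ p : Nat.Primes,
      ((p : ℝ) ^ 2 + 1) / ((p : ℝ) ^ 2 - 1) =
        ((1 - zpow2hom p)⁻¹ * (1 - zpow2hom p)⁻¹) / (1 - zpow4hom p)⁻¹ := by
    intro p
    have hp : (2 : ℝ) ≤ (p : ℕ) := by exact_mod_cast p.2.two_le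
    have h0 : (0 : ℝ) < (p : ℕ) := by linarith
    have h1 : ((p : ℕ) : ℝ) ^ 2 - 1 ≠ 0 := by nlinarith
    have h2' : ((p : ℕ) : ℝ) ^ 2 + 1 ≠ 0 := by nlinarith
    have h0' : ((p : ℕ) : ℝ) ≠ 0 := ne_of_gt h0
    simp only [zpow2hom_apply, zpow4hom_apply]
    rw [show (p : ℝ) = ((p : ℕ) : ℝ) from rfl]
    field_simp
    ring
  have hv : (π ^ 2 / 6) * (π ^ 2 / 6) / (π ^ 4 / 90) = (5 / 2 : ℝ) := by
    have hπ : (π : ℝ) ≠ 0 := Real.pi_ne_zero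
    field_simp
    ring
  have hkey : HasProd (fun p : Nat.Primes ↦ ((p : ℝ) ^ 2 + 1) / ((p : ℝ) ^ 2 - 1)) (5 / 2) := by
    have Ht := Filter.Tendsto.div (h2.mul h2) h4 hne
    rw [hv] at Ht
    rw [HasProd]
    convert Ht using 2 with s
    simp only [Pi.div_apply]
    rw [← Finset.prod_div_distrib]
    exact Finset.prod_congr rfl fun p _ ↦ hpoint p
  exact hkey.tprod_eq
end

section
/- If (p_n) is an increasing sequence of positive integers such that for some constant c > 0 one has n ≤ c · p_n / (log p_n)² for all n ≥ 2, then the series ∑_{n≥1} 1/p_n converges. -/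
open Real

lemma aux_nlogsq_mono {m n : ℕ} (hm : 2 ≤ m) (hmn : m ≤ n) :
    (m : ℝ) * Real.log m ^ 2 ≤ (n : ℝ) * Real.log n ^ 2 := by
  have hlogm : 0 ≤ Real.log m := Real.log_nonneg (by exact_mod_cast hm.trans' (by norm_num))
  have hcast : (m : ℝ) ≤ n := by exact_mod_cast hmn
  have hlog : Real.log m ≤ Real.log n := Real.log_le_log (by positivity) hcast
  calc (m:ℝ) * Real.log m ^ 2 ≤ (n:ℝ) * Real.log m ^ 2 :=
        mul_le_mul_of_nonneg_right hcast (sq_nonneg _)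
    _ ≤ (n:ℝ) * Real.log n ^ 2 :=
        mul_le_mul_of_nonneg_left (pow_le_pow_left₀ hlogm hlog 2) (by positivity)

lemma aux_nlogsq_pos {n : ℕ} (hn : 2 ≤ n) : 0 < (n : ℝ) * Real.log n ^ 2 := by
  have h1 : (1:ℝ) < n := by exact_mod_cast hn.trans' (by norm_num)
  have := Real.log_pos h1
  positivity

lemma aux_f_summable : Summable (fun n : ℕ => if n ≤ 1 then (2:ℝ) else 1 / (n * Real.log n ^ 2)) := by
  set f : ℕ → ℝ := fun n => if n ≤ 1 then (2:ℝ) else 1 / (n * Real.log n ^ 2) with hfdef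
  have hlog2 : (1/2 : ℝ) < Real.log 2 := by
    have := Real.log_two_gt_d9; linarith
  have hlog2pos : (0:ℝ) < Real.log 2 := by linarith
  have hle2 : ∀ n : ℕ, 2 ≤ n → 1 / ((n:ℝ) * Real.log n ^ 2) ≤ 2 := by
    intro n hn
    have h2 : (2:ℝ) * Real.log 2 ^ 2 ≤ (n:ℝ) * Real.log n ^ 2 := by
      have := aux_nlogsq_mono (le_refl 2) hn
      simpa using this
    have hhalf : (1/2 : ℝ) ≤ (2:ℝ) * Real.log 2 ^ 2 := by nlinarith
    rw [div_le_iff₀ (by linarith [aux_nlogsq_pos hn])]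
    nlinarith [aux_nlogsq_pos hn]
  have hnonneg : ∀ n, 0 ≤ f n := by
    intro n
    by_cases h : n ≤ 1 <;> simp only [hfdef, h, if_true, if_false]
    · norm_num
    · have := aux_nlogsq_pos (n := n) (by omega); positivity
  have hmono : ∀ ⦃m n : ℕ⦄, 0 < m → m ≤ n → f n ≤ f m := by
    intro m n hm hmn
    by_cases hm1 : m ≤ 1
    · by_cases hn1 : n ≤ 1
      · simp [hfdef, hm1, hn1]
      · simp only [hfdef, hm1, hn1, if_true, if_false]
        exact hle2 n (by omega)
    · have hn1 : ¬ n ≤ 1 := by omega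
      simp only [hfdef, hm1, hn1, if_false]
      apply one_div_le_one_div_of_le (aux_nlogsq_pos (by omega))
      exact aux_nlogsq_mono (by omega) hmn
  rw [← summable_condensed_iff_of_nonneg hnonneg hmono]
  have hkey : ∀ k : ℕ, 1 ≤ k → (2:ℝ) ^ k * f (2 ^ k) = 1 / Real.log 2 ^ 2 * (1 / (k:ℝ) ^ 2) := by
    intro k hk
    have h2k : ¬ (2 ^ k ≤ 1) := by
      have : 2 ≤ 2 ^ k := Nat.one_lt_two_pow_iff.mpr (by omega)
      omega
    simp only [hfdef, h2k, if_false]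
    have hpos : (0:ℝ) < 2 ^ k := by positivity
    have hlog : Real.log ((2:ℕ)^k : ℕ) = k * Real.log 2 := by
      push_cast
      rw [Real.log_pow]
    push_cast
    rw [Real.log_pow]
    have hkpos : (0:ℝ) < (k:ℝ) := by exact_mod_cast hk
    field_simp
  have hsum : Summable (fun k : ℕ => 1 / Real.log 2 ^ 2 * (1 / (k:ℝ) ^ 2)) := by
    exact (Real.summable_one_div_nat_pow.mpr (by norm_num)).mul_left _
  rw [← summable_nat_add_iff 1]
  apply Summable.congr ((summable_nat_add_iff 1).mpr hsum)
  intro k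
  exact (hkey (k + 1) (by omega)).symm

theorem summable_reciprocal_of_counting_bound (p : ℕ → ℕ) (hmono : StrictMono p)
    (hp2 : ∀ n, 2 ≤ p n) (c : ℝ) (hc : 0 < c)
    (hbound : ∀ n : ℕ, 2 ≤ n → (n : ℝ) ≤ c * (p n : ℝ) / (Real.log (p n)) ^ 2) :
    Summable (fun n : ℕ => 1 / (p n : ℝ)) := by
  rw [← summable_nat_add_iff 2]
  set f : ℕ → ℝ := fun n => if n ≤ 1 then (2:ℝ) else 1 / (n * Real.log n ^ 2) with hfdef
  have hsum : Summable (fun n : ℕ => c * f (n + 2)) :=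
    ((summable_nat_add_iff 2).mpr aux_f_summable).mul_left c
  apply Summable.of_nonneg_of_le (fun n => by positivity) _ hsum
  intro n
  set m := n + 2 with hm
  have hm2 : 2 ≤ m := by omega
  have hpm : (2:ℕ) ≤ p m := hp2 m
  have hppos : (0:ℝ) < (p m : ℝ) := by exact_mod_cast Nat.lt_of_lt_of_le (by norm_num) hpm
  have hlogp : 0 < Real.log (p m) := Real.log_pos (by exact_mod_cast Nat.lt_of_lt_of_le (by norm_num) hpm)
  have hb := hbound m hm2
  -- m * (log p m)^2 ≤ c * p m
  have hkey : (m:ℝ) * Real.log (p m) ^ 2 ≤ c * (p m : ℝ) := by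
    rw [div_eq_mul_inv] at hb
    have h2 : (0:ℝ) < Real.log (p m) ^ 2 := by positivity
    calc (m:ℝ) * Real.log (p m) ^ 2 ≤ (c * (p m : ℝ) * (Real.log (p m) ^ 2)⁻¹) * Real.log (p m) ^ 2 :=
          mul_le_mul_of_nonneg_right hb (le_of_lt h2)
      _ = c * (p m : ℝ) := by field_simp
  have hmp : (m:ℝ) ≤ (p m : ℝ) := by exact_mod_cast hmono.le_apply
  have hlogm : 0 ≤ Real.log m := Real.log_nonneg (by exact_mod_cast hm2.trans' (by norm_num))
  have hlogle : Real.log m ≤ Real.log (p m) := Real.log_le_log (by positivity) hmp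
  have hfm : f m = 1 / ((m:ℝ) * Real.log m ^ 2) := by
    have : ¬ m ≤ 1 := by omega
    simp [hfdef, this]
  have hmlogpos : 0 < (m:ℝ) * Real.log m ^ 2 := aux_nlogsq_pos hm2
  have hstep : (m:ℝ) * Real.log m ^ 2 ≤ c * (p m : ℝ) := by
    refine le_trans ?_ hkey
    apply mul_le_mul_of_nonneg_left (pow_le_pow_left₀ hlogm hlogle 2) (by positivity)
  rw [hfm, mul_one_div, div_le_div_iff₀ hppos hmlogpos]
  linarith
end

section
/- There exist constants 0 < a < b such that for all sufficiently large real x, a·x/log x ≤ π(x) ≤ b·x/log x. -/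
open Filter

lemma cheb_pi_card (j : ℕ) :
    Nat.primeCounting j = ((Finset.range (j + 1)).filter Nat.Prime).card := by
  rw [Nat.primeCounting, ← Nat.primesBelow_card_eq_primeCounting']
  rfl

lemma cheb_centralBinom_le (n : ℕ) (hn : 0 < n) :
    Nat.centralBinom n ≤ (2 * n) ^ (Nat.primeCounting (2 * n)) := by
  have h1 : (∏ p ∈ (Finset.range (2 * n + 1)).filter Nat.Prime,
      p ^ (Nat.centralBinom n).factorization p) = Nat.centralBinom n := by
    conv_rhs => rw [← Nat.prod_pow_factorization_centralBinom n]
    apply Finset.prod_filter_of_ne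
    intro p _ hp
    by_contra hnp
    rw [Nat.factorization_eq_zero_of_not_prime _ hnp, pow_zero] at hp
    exact hp rfl
  rw [← h1, cheb_pi_card]
  apply Finset.prod_le_pow_card
  intro p _
  rw [Nat.centralBinom]
  exact Nat.pow_factorization_choose_le (by omega)

lemma cheb_lower_nat (n : ℕ) (hn : 0 < n) :
    4 ^ n ≤ (2 * n) ^ (Nat.primeCounting (2 * n) + 1) := by
  calc 4 ^ n ≤ 2 * n * Nat.centralBinom n :=
        Nat.four_pow_le_two_mul_self_mul_centralBinom n hn
    _ ≤ 2 * n * (2 * n) ^ (Nat.primeCounting (2 * n)) := by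
        exact Nat.mul_le_mul_left _ (cheb_centralBinom_le n hn)
    _ = (2 * n) ^ (Nat.primeCounting (2 * n) + 1) := by ring

lemma cheb_upper_nat (n : ℕ) (hn : 2 ≤ n) :
    ∃ k : ℕ, Nat.primeCounting n = Nat.primeCounting n.sqrt + k ∧
      (n.sqrt + 1) ^ k ≤ 4 ^ n := by
  set m := n.sqrt with hm
  have hmn : m ≤ n := Nat.sqrt_le_self n
  set S := (Finset.Ico (m + 1) (n + 1)).filter Nat.Prime with hS
  refine ⟨S.card, ?_, ?_⟩
  · have hsplit : Finset.range (n + 1) = Finset.range (m + 1) ∪ Finset.Ico (m + 1) (n + 1) := by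
      rw [Finset.range_eq_Ico, Finset.range_eq_Ico]
      exact (Finset.Ico_union_Ico_eq_Ico (Nat.zero_le _) (Nat.succ_le_succ hmn)).symm
    rw [cheb_pi_card, cheb_pi_card, hsplit, Finset.filter_union,
      Finset.card_union_of_disjoint]
    exact Finset.disjoint_filter_filter
      (by rw [Finset.range_eq_Ico]; exact Finset.Ico_disjoint_Ico_consecutive 0 (m + 1) (n + 1))
  · calc (m + 1) ^ S.card ≤ ∏ p ∈ S, p := by
          apply Finset.pow_card_le_prod
          intro p hp
          simp only [hS, Finset.mem_filter, Finset.mem_Ico] at hp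
          exact hp.1.1
      _ ≤ primorial n := by
          apply Finset.prod_le_prod_of_subset_of_one_le'
          · intro p hp
            simp only [hS, Finset.mem_filter, Finset.mem_Ico] at hp
            simp only [Finset.mem_filter, Finset.mem_range]
            exact ⟨by omega, hp.2⟩
          · intro p hp _
            simp only [Finset.mem_filter] at hp
            exact hp.2.one_lt.le
      _ ≤ 4 ^ n := primorial_le_4_pow n

lemma cheb_tendsto_div_log :
    Tendsto (fun x : ℝ => x / Real.log x) atTop atTop := by
  rw [tendsto_atTop]
  intro M
  have h := Real.isLittleO_log_id_atTop.def (c := 1 / max M 1) (by positivity)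
  filter_upwards [h, eventually_gt_atTop (1 : ℝ)] with x hx hx1
  have hlogpos : 0 < Real.log x := Real.log_pos hx1
  have hMpos : 0 < max M 1 := lt_of_lt_of_le one_pos (le_max_right M 1)
  rw [Real.norm_eq_abs, Real.norm_eq_abs, abs_of_pos hlogpos, id,
    abs_of_pos (by linarith : (0:ℝ) < x)] at hx
  have : max M 1 * Real.log x ≤ x := by
    have h2 := mul_le_mul_of_nonneg_left hx hMpos.le
    rw [show (max M 1) * (1 / max M 1 * x) = x by field_simp] at h2
    exact h2
  calc M ≤ max M 1 := le_max_left M 1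
    _ ≤ x / Real.log x := by rw [le_div_iff₀ hlogpos]; exact this

theorem chebyshev_pi_bounds :
    ∃ a b : ℝ, 0 < a ∧ a < b ∧
      ∀ᶠ x : ℝ in atTop,
        a * x / Real.log x ≤ (Nat.primeCounting ⌊x⌋₊ : ℝ) ∧
        (Nat.primeCounting ⌊x⌋₊ : ℝ) ≤ b * x / Real.log x := by
  refine ⟨1/2, 10, by norm_num, by norm_num, ?_⟩
  have hlog4 : Real.log 4 = 2 * Real.log 2 := by
    rw [show (4:ℝ) = 2 ^ 2 by norm_num, Real.log_pow]; push_cast; ring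
  have h4lb : (5:ℝ)/4 ≤ Real.log 4 := by
    rw [hlog4]; nlinarith [Real.log_two_gt_d9]
  have h4ub : Real.log 4 ≤ 3/2 := by
    rw [hlog4]; nlinarith [Real.log_two_lt_d9]
  have hsmall : ∀ᶠ x : ℝ in atTop, Real.log x ≤ x / 16 := by
    have h := Real.isLittleO_log_id_atTop.def (c := 1/16) (by norm_num)
    filter_upwards [h, eventually_gt_atTop (1 : ℝ)] with x hx hx1
    rw [Real.norm_eq_abs, Real.norm_eq_abs, abs_of_pos (Real.log_pos hx1), id,
      abs_of_pos (by linarith : (0:ℝ) < x)] at hx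
    linarith
  filter_upwards [hsmall, eventually_ge_atTop (32 : ℝ)] with x hlogx hx32
  have hx1 : (1:ℝ) < x := by linarith
  have hx0 : (0:ℝ) ≤ x := by linarith
  have hlogpos : 0 < Real.log x := Real.log_pos hx1
  constructor
  · -- lower bound
    set n := ⌊x/2⌋₊ with hn
    have hn1 : 1 ≤ n := Nat.le_floor (by push_cast; linarith)
    have hfl : (n:ℝ) ≤ x / 2 := Nat.floor_le (by linarith)
    have h2n : (2 * n : ℝ) ≤ x := by linarith
    have hnx : x / 2 - 1 ≤ (n:ℝ) := by
      have := Nat.lt_floor_add_one (x/2)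
      push_cast at this ⊢
      linarith
    have hA := cheb_lower_nat n hn1
    have hAR : ((4:ℝ)) ^ n ≤ ((2 * n : ℕ) : ℝ) ^ (Nat.primeCounting (2 * n) + 1) := by
      exact_mod_cast hA
    have h2npos : (0:ℝ) < ((2 * n : ℕ) : ℝ) := by positivity
    have hlogA : (n:ℝ) * Real.log 4 ≤
        ((Nat.primeCounting (2 * n) : ℝ) + 1) * Real.log ((2 * n : ℕ) : ℝ) := by
      have h := Real.log_le_log (by positivity) hAR
      rw [Real.log_pow, Real.log_pow] at h
      push_cast at h ⊢
      linarith
    have hlog2n_le : Real.log ((2 * n : ℕ) : ℝ) ≤ Real.log x := by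
      apply Real.log_le_log (by positivity)
      push_cast
      linarith
    have hmono : (Nat.primeCounting (2 * n) : ℝ) ≤ (Nat.primeCounting ⌊x⌋₊ : ℝ) := by
      exact_mod_cast Nat.monotone_primeCounting
        (Nat.le_floor (by push_cast; linarith) : 2 * n ≤ ⌊x⌋₊)
    set P := (Nat.primeCounting ⌊x⌋₊ : ℝ)
    have hPnn : (0:ℝ) ≤ Nat.primeCounting (2 * n) := Nat.cast_nonneg _
    have key : (n:ℝ) * Real.log 4 ≤ (P + 1) * Real.log x := by
      calc (n:ℝ) * Real.log 4
          ≤ ((Nat.primeCounting (2 * n) : ℝ) + 1) * Real.log ((2 * n : ℕ) : ℝ) := hlogA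
        _ ≤ ((Nat.primeCounting (2 * n) : ℝ) + 1) * Real.log x := by
            apply mul_le_mul_of_nonneg_left hlog2n_le (by linarith)
        _ ≤ (P + 1) * Real.log x := by
            apply mul_le_mul_of_nonneg_right (by linarith) hlogpos.le
    rw [div_le_iff₀ hlogpos]
    have h1 : (x/2 - 1) * (5/4) ≤ (n:ℝ) * Real.log 4 := by
      have : (x/2 - 1) * (5/4) ≤ (n:ℝ) * (5/4) := by
        apply mul_le_mul_of_nonneg_right hnx (by norm_num)
      calc (x/2 - 1) * (5/4) ≤ (n:ℝ) * (5/4) := this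
        _ ≤ (n:ℝ) * Real.log 4 := by
            apply mul_le_mul_of_nonneg_left h4lb (Nat.cast_nonneg _)
    -- (x/2-1)*(5/4) ≤ (P+1)*log x = P*log x + log x ≤ P*log x + x/16
    linarith
  · -- upper bound
    set n := ⌊x⌋₊ with hn
    have hn2 : 2 ≤ n := Nat.le_floor (by push_cast; linarith)
    have hnx : (n:ℝ) ≤ x := Nat.floor_le hx0
    have hxn1 : x < (n:ℝ) + 1 := by
      have := Nat.lt_floor_add_one x
      push_cast at this ⊢
      linarith
    obtain ⟨k, hk1, hk2⟩ := cheb_upper_nat n hn2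
    set m := n.sqrt with hm
    have hm1 : 1 ≤ m := by
      rw [hm]
      have : 0 < n.sqrt := Nat.sqrt_pos.mpr (by omega)
      omega
    have hkR : (k:ℝ) * Real.log ((m:ℝ) + 1) ≤ (n:ℝ) * Real.log 4 := by
      have hc : ((m + 1 : ℕ) : ℝ) ^ k ≤ ((4:ℝ)) ^ n := by exact_mod_cast hk2
      have h := Real.log_le_log (by positivity) hc
      rw [Real.log_pow, Real.log_pow] at h
      push_cast at h ⊢
      linarith
    -- x < (m+1)^2, so log x ≤ 2 log (m+1)
    have hmsqn : n + 1 ≤ (m + 1) ^ 2 := Nat.lt_succ_sqrt' n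
    have hmsq : (n:ℝ) + 1 ≤ ((m:ℝ) + 1) ^ 2 := by exact_mod_cast hmsqn
    have hxm : x < ((m:ℝ) + 1) ^ 2 := by linarith
    have hlogxm : Real.log x ≤ 2 * Real.log ((m:ℝ) + 1) := by
      have h := Real.log_le_log (by linarith) hxm.le
      rwa [Real.log_pow] at h
      -- log (( m+1)^2) = 2 * log (m+1)
    have hklog : (k:ℝ) * Real.log x ≤ 2 * ((n:ℝ) * Real.log 4) := by
      calc (k:ℝ) * Real.log x ≤ (k:ℝ) * (2 * Real.log ((m:ℝ) + 1)) := by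
            apply mul_le_mul_of_nonneg_left hlogxm (Nat.cast_nonneg _)
        _ = 2 * ((k:ℝ) * Real.log ((m:ℝ) + 1)) := by ring
        _ ≤ 2 * ((n:ℝ) * Real.log 4) := by linarith
    have hklogx : (k:ℝ) * Real.log x ≤ 3 * x := by
      have : (n:ℝ) * Real.log 4 ≤ x * (3/2) := by
        apply mul_le_mul hnx h4ub (by rw [hlog4]; positivity) hx0
      linarith
    -- π m ≤ m + 1
    have hπm : (Nat.primeCounting m : ℝ) ≤ (m:ℝ) + 1 := by
      have : Nat.primeCounting m ≤ m + 1 := by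
        rw [cheb_pi_card]
        calc ((Finset.range (m + 1)).filter Nat.Prime).card
            ≤ (Finset.range (m + 1)).card := Finset.card_filter_le _ _
          _ = m + 1 := Finset.card_range _
      exact_mod_cast this
    -- m ≤ sqrt x
    have hsx0 : (0:ℝ) ≤ Real.sqrt x := Real.sqrt_nonneg x
    have hms : (m:ℝ) ≤ Real.sqrt x := by
      rw [Real.le_sqrt (Nat.cast_nonneg m) hx0]
      have h1 : (m ^ 2 : ℕ) ≤ n := by rw [hm]; exact Nat.sqrt_le' n
      have h2 : ((m ^ 2 : ℕ) : ℝ) ≤ (n:ℝ) := by exact_mod_cast h1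
      push_cast at h2
      linarith
    have hsq : Real.sqrt x * Real.sqrt x = x := Real.mul_self_sqrt hx0
    have hlogsx : Real.log x ≤ 2 * Real.sqrt x - 2 := by
      have h1 := Real.log_le_sub_one_of_pos (show 0 < Real.sqrt x from
        Real.sqrt_pos.mpr (by linarith))
      rw [Real.log_sqrt hx0] at h1
      linarith
    rw [le_div_iff₀ hlogpos]
    have hPsplit : (Nat.primeCounting n : ℝ) = (Nat.primeCounting m : ℝ) + (k:ℝ) := by
      exact_mod_cast hk1
    have h2 : (Nat.primeCounting m : ℝ) * Real.log x ≤ ((m:ℝ) + 1) * Real.log x :=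
      mul_le_mul_of_nonneg_right hπm hlogpos.le
    have h3 : ((m:ℝ) + 1) * Real.log x ≤ (Real.sqrt x + 1) * (2 * Real.sqrt x - 2) := by
      apply mul_le_mul (by linarith) hlogsx hlogpos.le (by positivity)
    have h4 : (Real.sqrt x + 1) * (2 * Real.sqrt x - 2) = 2 * x - 2 := by nlinarith [hsq]
    have hfinal : (Nat.primeCounting n : ℝ) * Real.log x ≤ 5 * x := by
      rw [hPsplit, add_mul]
      linarith
    linarith
end

section
/- Let q be an odd prime such that p = 2q + 1 is also prime and p ≡ 3 (mod 8). Then 2 is a primitive root modulo p. -/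
theorem two_primitive_root_of_germain_three_mod_eight (q p : ℕ)
    (hq : q.Prime) (hqodd : Odd q) (hp : p.Prime) (hpq : p = 2 * q + 1)
    (hp8 : p % 8 = 3) :
    orderOf (2 : ZMod p) = p - 1 := by
  have hq3 : 3 ≤ q := by
    rcases hqodd with ⟨k, hk⟩
    have := hq.two_le
    omega
  have hp7 : 7 ≤ p := by omega
  haveI : Fact p.Prime := ⟨hp⟩
  have h2ne : (2 : ZMod p) ≠ 0 := by
    have : ((2 : ℕ) : ZMod p) ≠ 0 := by
      rw [Ne, ZMod.natCast_eq_zero_iff]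
      intro h
      have := Nat.le_of_dvd (by norm_num) h
      omega
    simpa using this
  have hnsq : ¬ IsSquare (2 : ZMod p) := by
    rw [ZMod.exists_sq_eq_two_iff (by omega)]
    omega
  have heuler : (2 : ZMod p) ^ q ≠ 1 := by
    intro h
    apply hnsq
    rw [ZMod.euler_criterion p h2ne]
    have : p / 2 = q := by omega
    rw [this]; exact h
  set d := orderOf (2 : ZMod p) with hd
  have hdvd : d ∣ 2 * q := by
    apply orderOf_dvd_of_pow_eq_one
    have := ZMod.pow_card_sub_one_eq_one h2ne
    have hpe : p - 1 = 2 * q := by omega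
    rwa [hpe] at this
  have hndvd : ¬ d ∣ q := by
    intro h
    exact heuler (orderOf_dvd_iff_pow_eq_one.mp h)
  have hne2 : d ≠ 2 := by
    intro h
    have h1 : (2 : ZMod p) ^ 2 = 1 := by
      rw [← h]; exact pow_orderOf_eq_one _
    have h3 : ((3 : ℕ) : ZMod p) = 0 := by
      push_cast
      linear_combination h1
    rw [ZMod.natCast_eq_zero_iff] at h3
    have := Nat.le_of_dvd (by norm_num) h3
    omega
  have : d = 2 * q := by
    by_cases hqd : q ∣ d
    · obtain ⟨k, hk⟩ := hqd
      have hk2 : k ∣ 2 := by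
        have : q * k ∣ q * 2 := by rw [← hk]; rwa [Nat.mul_comm] at hdvd
        exact (Nat.mul_dvd_mul_iff_left (by omega)).mp this
      rcases (Nat.dvd_prime Nat.prime_two).mp hk2 with rfl | rfl
      · exfalso; apply hndvd; simp [hk]
      · omega
    · have hcop : Nat.Coprime d q := ((hq.coprime_iff_not_dvd).mpr hqd).symm
      have hd2 : d ∣ 2 := hcop.dvd_of_dvd_mul_right hdvd
      rcases (Nat.dvd_prime Nat.prime_two).mp hd2 with h1 | h1
      · exfalso; apply hndvd; rw [h1]; exact Nat.one_dvd _
      · exact absurd h1 hne2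
  rw [this]; omega
end

section
/- Let q be an odd prime such that p = 2q + 1 is also prime and p ≡ 7 (mod 8). Then -2 is a primitive root modulo p. -/
theorem neg_two_primitive_root_of_germain_seven_mod_eight (q p : ℕ)
    (hq : q.Prime) (hqodd : Odd q) (hp : p.Prime) (hpq : p = 2 * q + 1)
    (hp8 : p % 8 = 7) :
    orderOf (-2 : ZMod p) = p - 1 := by
  haveI : Fact p.Prime := ⟨hp⟩
  have hp2 : p ≠ 2 := by omega
  have hp7 : 7 ≤ p := by omega
  have hne : (-2 : ZMod p) ≠ 0 := by
    intro h
    rw [neg_eq_zero, show (2 : ZMod p) = ((2:ℕ) : ZMod p) by push_cast; ring,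
      ZMod.natCast_eq_zero_iff] at h
    have := Nat.le_of_dvd (by norm_num) h
    omega
  have hdvd : orderOf (-2 : ZMod p) ∣ 2 * q := by
    have := ZMod.pow_card_sub_one_eq_one hne
    rw [orderOf_dvd_iff_pow_eq_one]
    rw [show 2 * q = p - 1 by omega]
    exact this
  have hnotsq : ¬ IsSquare (-2 : ZMod p) := by
    rw [ZMod.exists_sq_eq_neg_two_iff hp2]
    omega
  have hq_ndvd : ¬ orderOf (-2 : ZMod p) ∣ q := by
    intro h
    rw [orderOf_dvd_iff_pow_eq_one] at h
    exact hnotsq ((ZMod.euler_criterion p hne).mpr (by rwa [show p / 2 = q by omega]))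
  have hsq_ne : ((-2 : ZMod p)) ^ 2 ≠ 1 := by
    intro h
    have h3 : ((3:ℕ) : ZMod p) = 0 := by
      push_cast
      have : (4 : ZMod p) = 1 := by linear_combination h
      linear_combination this
    rw [ZMod.natCast_eq_zero_iff] at h3
    have := Nat.le_of_dvd (by norm_num) h3
    omega
  have hq_dvd : q ∣ orderOf (-2 : ZMod p) := by
    by_contra h
    have hcop : Nat.Coprime (orderOf (-2 : ZMod p)) q :=
      (hq.coprime_iff_not_dvd.mpr h).symm
    have h2 : orderOf (-2 : ZMod p) ∣ 2 := hcop.dvd_of_dvd_mul_right hdvd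
    exact hsq_ne (orderOf_dvd_iff_pow_eq_one.mp h2)
  obtain ⟨k, hk⟩ := hq_dvd
  have hk2 : k ∣ 2 := by
    have : q * k ∣ q * 2 := by rw [← hk]; rw [mul_comm] at hdvd; exact hdvd
    exact (mul_dvd_mul_iff_left hq.pos.ne').mp this
  rcases (Nat.dvd_prime Nat.prime_two).mp hk2 with rfl | rfl
  · exact absurd (by simp [hk]) hq_ndvd
  · omega
end

section
/- Let q be an odd prime such that p = 4q + 1 is also prime. Then 2 is a primitive root modulo p. -/
theorem two_primitive_root_of_four_q_add_one (q p : ℕ)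
    (hq : q.Prime) (hqodd : Odd q) (hp : p.Prime) (hpq : p = 4 * q + 1) :
    orderOf (2 : ZMod p) = p - 1 := by
  haveI : Fact p.Prime := ⟨hp⟩
  have hq2 : q ≠ 2 := by rintro rfl; exact (by decide : ¬ Odd 2) hqodd
  have hq3 : 3 ≤ q := by
    have := hq.two_le; omega
  have hp13 : 13 ≤ p := by omega
  have h2ne : (2 : ZMod p) ≠ 0 := by
    have : ((2 : ℕ) : ZMod p) ≠ 0 := by
      rw [Ne, ZMod.natCast_eq_zero_iff]
      intro h
      have := Nat.le_of_dvd (by norm_num) h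
      omega
    simpa using this
  have hp8 : p % 8 = 5 := by
    obtain ⟨k, hk⟩ := hqodd
    omega
  have hns : ¬ IsSquare (2 : ZMod p) := by
    rw [ZMod.exists_sq_eq_two_iff (by omega)]
    omega
  have hpow : (2 : ZMod p) ^ (2 * q) ≠ 1 := by
    have h2q : p / 2 = 2 * q := by omega
    rw [← h2q]
    intro h
    exact hns ((ZMod.euler_criterion p h2ne).mpr h)
  set d := orderOf (2 : ZMod p) with hd
  have hd4q : d ∣ 4 * q := by
    have h := ZMod.orderOf_dvd_card_sub_one h2ne
    exact h.trans (dvd_of_eq (by omega))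
  have hd2q : ¬ d ∣ 2 * q := fun h => hpow (orderOf_dvd_iff_pow_eq_one.mp h)
  have hd4 : ¬ d ∣ 4 := by
    intro h
    have h16 : (2 : ZMod p) ^ 4 = 1 := by
      have := orderOf_dvd_iff_pow_eq_one.mp h
      exact this
    have h15 : ((15 : ℕ) : ZMod p) = 0 := by
      push_cast
      linear_combination h16
    rw [ZMod.natCast_eq_zero_iff] at h15
    have hle := Nat.le_of_dvd (by norm_num) h15
    have hpv : p = 13 ∨ p = 14 ∨ p = 15 := by omega
    rcases hpv with h | h | h <;> subst h <;> omega
  have hqd : q ∣ d := by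
    by_contra hqd
    have hco : Nat.Coprime d q := ((hq.coprime_iff_not_dvd.mpr hqd)).symm
    exact hd4 (hco.dvd_of_dvd_mul_right hd4q)
  obtain ⟨e, he⟩ := hqd
  have he4 : e ∣ 4 := by
    have h : q * e ∣ q * 4 := by rw [← he, mul_comm q 4]; exact hd4q
    exact (Nat.mul_dvd_mul_iff_left (by omega : 0 < q)).mp h
  have he4' : e = 4 := by
    have h1 : e ≤ 4 := Nat.le_of_dvd (by norm_num) he4
    have h0 : 0 < e := by
      have hdpos : 0 < d := Nat.pos_of_dvd_of_pos hd4q (by omega)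
      rw [he] at hdpos
      rcases Nat.eq_zero_or_pos e with rfl | h
      · simp at hdpos
      · exact h
    interval_cases e
    · exfalso; exact hd2q (by rw [he]; exact ⟨2, by ring⟩)
    · exfalso; exact hd2q (by rw [he]; exact ⟨1, by ring⟩)
    · exfalso; revert he4; decide
    · rfl
  rw [he, he4']; omega
end
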